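/- arXiv:math/0210387 — 2 statements merged into one kernel-verified Lean document; each statement's English description precedes it below -/
import Mathlib

section
/- Finitary cut suffices: if a structure R is provable in SKS with unrestricted atomic cut ai↑, then R is provable in the system where every atomic cut instance ai↑: S(a,¬a) ⟹ S{f} satisfies the proviso that the atom a or ¬a occurs in the context S{ }. The proof proceeds by taking the bottommost violating cut instance and substituting t for a and f for ¬a in the subproof above its conclusion. -/
/-- Structures of system SKS. -/
inductive Str : Type
  | f : Str
  | t : Str
  | atom (n : ℕ) : Str
  | or (A B : Str) : Str
  | and (A B : Str) : Str
  | neg (A : Str) : Str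

/-- Positive contexts: a structure with one hole, not under a negation. -/
inductive Ctx : Type
  | hole : Ctx
  | orl (S : Ctx) (T : Str) : Ctx
  | orr (T : Str) (S : Ctx) : Ctx
  | andl (S : Ctx) (T : Str) : Ctx
  | andr (T : Str) (S : Ctx) : Ctx

def Ctx.fill : Ctx → Str → Str
  | .hole, R => R
  | .orl S T, R => .or (S.fill R) T
  | .orr T S, R => .or T (S.fill R)
  | .andl S T, R => .and (S.fill R) T
  | .andr T S, R => .and T (S.fill R)

/-- Structural equivalence `=` of SKS. -/
inductive equiv : Str → Str → Prop
  | refl (R) : equiv R R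
  | symm {A B} : equiv A B → equiv B A
  | trans {A B C} : equiv A B → equiv B C → equiv A C
  | or_congr {A B C D} : equiv A B → equiv C D → equiv (.or A C) (.or B D)
  | and_congr {A B C D} : equiv A B → equiv C D → equiv (.and A C) (.and B D)
  | neg_congr {A B} : equiv A B → equiv (.neg A) (.neg B)
  | or_assoc (A B C) : equiv (.or (.or A B) C) (.or A (.or B C))
  | or_comm (A B) : equiv (.or A B) (.or B A)
  | and_assoc (A B C) : equiv (.and (.and A B) C) (.and A (.and B C))
  | and_comm (A B) : equiv (.and A B) (.and B A)
  | dm_or (A B) : equiv (.neg (.or A B)) (.and (.neg A) (.neg B))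
  | dm_and (A B) : equiv (.neg (.and A B)) (.or (.neg A) (.neg B))
  | neg_neg (A) : equiv (.neg (.neg A)) A
  | neg_f : equiv (.neg .f) .t
  | neg_t : equiv (.neg .t) .f
  | or_f (R) : equiv (.or .f R) R
  | and_t (R) : equiv (.and .t R) R
  | or_t_t : equiv (.or .t .t) .t
  | and_f_f : equiv (.and .f .f) .f

/-- One inference step of SKS, applied in an arbitrary positive context. -/
inductive step : Str → Str → Prop
  | ai_down (S : Ctx) (a : ℕ) :
      step (S.fill .t) (S.fill (.or (.atom a) (.neg (.atom a))))
  | ai_up (S : Ctx) (a : ℕ) :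
      step (S.fill (.and (.atom a) (.neg (.atom a)))) (S.fill .f)
  | s (S : Ctx) (R U T : Str) :
      step (S.fill (.and (.or R U) T)) (S.fill (.or (.and R T) U))
  | c_down (S : Ctx) (R : Str) : step (S.fill (.or R R)) (S.fill R)
  | c_up (S : Ctx) (R : Str) : step (S.fill R) (S.fill (.and R R))
  | w_down (S : Ctx) (R : Str) : step (S.fill .f) (S.fill R)
  | w_up (S : Ctx) (R : Str) : step (S.fill R) (S.fill .t)

/-- Derivations in SKS: chains of rule instances and equivalence steps. -/
inductive Deriv : Str → Str → Prop
  | refl (R) : Deriv R R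
  | step {A B C} : step A B → Deriv B C → Deriv A C
  | eq {A B C} : equiv A B → Deriv B C → Deriv A C

/-- The atom `a` (or its negation) occurs in a structure. -/
def occurs (a : ℕ) : Str → Prop
  | .f => False
  | .t => False
  | .atom n => n = a
  | .or A B => occurs a A ∨ occurs a B
  | .and A B => occurs a A ∨ occurs a B
  | .neg A => occurs a A

/-- The atom `a` or `¬a` occurs in the context `S{ }`. -/
def Ctx.occurs (a : ℕ) : Ctx → Prop
  | .hole => False
  | .orl S T => S.occurs a ∨ _root_.occurs a T
  | .orr T S => _root_.occurs a T ∨ S.occurs a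
  | .andl S T => S.occurs a ∨ _root_.occurs a T
  | .andr T S => _root_.occurs a T ∨ S.occurs a

/-- SKS steps where atomic cut is replaced by the finitary cut `fai↑`:
the atom `a` or `¬a` must occur in the surrounding context. -/
inductive stepF : Str → Str → Prop
  | ai_down (S : Ctx) (a : ℕ) :
      stepF (S.fill .t) (S.fill (.or (.atom a) (.neg (.atom a))))
  | fai_up (S : Ctx) (a : ℕ) (h : S.occurs a) :
      stepF (S.fill (.and (.atom a) (.neg (.atom a)))) (S.fill .f)
  | s (S : Ctx) (R U T : Str) :
      stepF (S.fill (.and (.or R U) T)) (S.fill (.or (.and R T) U))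
  | c_down (S : Ctx) (R : Str) : stepF (S.fill (.or R R)) (S.fill R)
  | c_up (S : Ctx) (R : Str) : stepF (S.fill R) (S.fill (.and R R))
  | w_down (S : Ctx) (R : Str) : stepF (S.fill .f) (S.fill R)
  | w_up (S : Ctx) (R : Str) : stepF (S.fill R) (S.fill .t)

inductive derivF : Str → Str → Prop
  | refl (R) : derivF R R
  | step {A B C} : stepF A B → derivF B C → derivF A C
  | eq {A B C} : equiv A B → derivF B C → derivF A C

/-- Substitute `t` for the atom `a`. -/
def subst (a : ℕ) : Str → Str
  | .f => .f
  | .t => .t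
  | .atom n => if n = a then .t else .atom n
  | .or A B => .or (subst a A) (subst a B)
  | .and A B => .and (subst a A) (subst a B)
  | .neg A => .neg (subst a A)

def Ctx.subst (a : ℕ) : Ctx → Ctx
  | .hole => .hole
  | .orl S T => .orl (S.subst a) (_root_.subst a T)
  | .orr T S => .orr (_root_.subst a T) (S.subst a)
  | .andl S T => .andl (S.subst a) (_root_.subst a T)
  | .andr T S => .andr (_root_.subst a T) (S.subst a)

lemma fill_subst (a : ℕ) (S : Ctx) (X : Str) :
    subst a (S.fill X) = (S.subst a).fill (subst a X) := by
  induction S <;> simp [Ctx.fill, Ctx.subst, subst, *]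

lemma subst_of_not_occurs {a : ℕ} {A : Str} (h : ¬ occurs a A) : subst a A = A := by
  induction A <;> simp_all [occurs, subst]

lemma ctx_subst_of_not_occurs {a : ℕ} {S : Ctx} (h : ¬ S.occurs a) : S.subst a = S := by
  induction S <;> simp_all [Ctx.occurs, Ctx.subst, subst_of_not_occurs]

lemma occurs_subst {a b : ℕ} (hba : b ≠ a) {A : Str} (h : occurs b A) :
    occurs b (subst a A) := by
  induction A with
  | atom n =>
    simp only [occurs] at h; subst h
    simp [subst, hba, occurs]
  | _ => simp_all [occurs, subst] <;> tauto

lemma ctx_occurs_subst {a b : ℕ} (hba : b ≠ a) {S : Ctx} (h : S.occurs b) :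
    (S.subst a).occurs b := by
  induction S <;> simp_all [Ctx.occurs, Ctx.subst] <;>
    first
    | exact h.imp (fun h' => by tauto) (occurs_subst hba)
    | exact h.imp (occurs_subst hba) (fun h' => by tauto)

lemma equiv_fill {X Y : Str} (S : Ctx) (h : equiv X Y) : equiv (S.fill X) (S.fill Y) := by
  induction S with
  | hole => exact h
  | orl S T ih => exact .or_congr ih (.refl T)
  | orr T S ih => exact .or_congr (.refl T) ih
  | andl S T ih => exact .and_congr ih (.refl T)
  | andr T S ih => exact .and_congr (.refl T) ih

lemma derivF_trans {A B C : Str} (h1 : derivF A B) (h2 : derivF B C) : derivF A C := by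
  induction h1 with
  | refl => exact h2
  | step s _ ih => exact .step s (ih h2)
  | eq e _ ih => exact .eq e (ih h2)

lemma equiv_subst (a : ℕ) {A B : Str} (h : equiv A B) : equiv (subst a A) (subst a B) := by
  induction h with
  | refl => exact .refl _
  | symm _ ih => exact .symm ih
  | trans _ _ ih1 ih2 => exact .trans ih1 ih2
  | or_congr _ _ ih1 ih2 => exact .or_congr ih1 ih2
  | and_congr _ _ ih1 ih2 => exact .and_congr ih1 ih2
  | neg_congr _ ih => exact .neg_congr ih
  | or_assoc A B C => exact .or_assoc _ _ _
  | or_comm A B => exact .or_comm _ _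
  | and_assoc A B C => exact .and_assoc _ _ _
  | and_comm A B => exact .and_comm _ _
  | dm_or A B => exact .dm_or _ _
  | dm_and A B => exact .dm_and _ _
  | neg_neg A => exact .neg_neg _
  | neg_f => exact .neg_f
  | neg_t => exact .neg_t
  | or_f R => exact .or_f _
  | and_t R => exact .and_t _
  | or_t_t => exact .or_t_t
  | and_f_f => exact .and_f_f

/-- `t ∧ ¬t = f`. -/
lemma equiv_tcut : equiv (.and .t (.neg .t)) .f :=
  .trans (.and_congr (.refl _) .neg_t) (.and_t _)

/-- `t ∨ ¬t = t`. -/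
lemma equiv_tex : equiv (.or .t (.neg .t)) .t :=
  .trans (.or_congr (.refl _) .neg_t)
    (.trans (.or_comm _ _) (.or_f _))

lemma stepF_subst (a : ℕ) {A B : Str} (h : stepF A B) :
    derivF (subst a A) (subst a B) := by
  cases h with
  | ai_down S b =>
    rw [fill_subst, fill_subst]
    by_cases hb : b = a
    · subst hb
      simp only [subst, if_pos rfl]
      exact .eq (equiv_fill _ (.symm equiv_tex)) (.refl _)
    · simp only [subst, if_neg hb]
      exact .step (.ai_down (S.subst a) b) (.refl _)
  | fai_up S b hb =>
    rw [fill_subst, fill_subst]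
    by_cases hba : b = a
    · subst hba
      simp only [subst, if_pos rfl]
      exact .eq (equiv_fill _ equiv_tcut) (.refl _)
    · simp only [subst, if_neg hba]
      exact .step (.fai_up (S.subst a) b (ctx_occurs_subst hba hb)) (.refl _)
  | s S R U T =>
    rw [fill_subst, fill_subst]
    exact .step (.s (S.subst a) (subst a R) (subst a U) (subst a T)) (.refl _)
  | c_down S R =>
    rw [fill_subst, fill_subst]
    exact .step (.c_down (S.subst a) (subst a R)) (.refl _)
  | c_up S R =>
    rw [fill_subst, fill_subst]
    exact .step (.c_up (S.subst a) (subst a R)) (.refl _)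
  | w_down S R =>
    rw [fill_subst, fill_subst]
    exact .step (.w_down (S.subst a) (subst a R)) (.refl _)
  | w_up S R =>
    rw [fill_subst, fill_subst]
    exact .step (.w_up (S.subst a) (subst a R)) (.refl _)

lemma derivF_subst (a : ℕ) {A B : Str} (h : derivF A B) :
    derivF (subst a A) (subst a B) := by
  induction h with
  | refl => exact .refl _
  | step s _ ih => exact derivF_trans (stepF_subst a s) ih
  | eq e _ ih => exact .eq (equiv_subst a e) ih

/-- Replace the bottommost step: extending a finitary proof by one SKS step. -/
lemma extend {A B : Str} (hA : derivF .t A) (h : step A B) : derivF .t B := by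
  cases h with
  | ai_up S a =>
    by_cases hS : S.occurs a
    · exact derivF_trans hA (.step (.fai_up S a hS) (.refl _))
    · have h1 := derivF_subst a hA
      rw [fill_subst] at h1
      rw [ctx_subst_of_not_occurs hS] at h1
      simp only [subst, if_pos rfl] at h1
      exact derivF_trans h1 (.eq (equiv_fill _ equiv_tcut) (.refl _))
  | ai_down S a => exact derivF_trans hA (.step (.ai_down S a) (.refl _))
  | s S R U T => exact derivF_trans hA (.step (.s S R U T) (.refl _))
  | c_down S R => exact derivF_trans hA (.step (.c_down S R) (.refl _))
  | c_up S R => exact derivF_trans hA (.step (.c_up S R) (.refl _))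
  | w_down S R => exact derivF_trans hA (.step (.w_down S R) (.refl _))
  | w_up S R => exact derivF_trans hA (.step (.w_up S R) (.refl _))

lemma main_aux {A B : Str} (h : Deriv A B) (hA : derivF .t A) : derivF .t B := by
  induction h with
  | refl => exact hA
  | step s _ ih => exact ih (extend hA s)
  | eq e _ ih => exact ih (derivF_trans hA (.eq e (.refl _)))

/-- if `R` is provable in SKS with unrestricted atomic cut,
then `R` is provable in the system where every atomic cut is finitary. -/
theorem finitary_cut_suffices (R : Str) (h : Deriv .t R) : derivF .t R := by
  exact main_aux h (.refl _)
end

section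
/- Strong consistency of SKS: for every structure R, it is not the case that both R and ¬R are provable in SKS. (Proof: conjoin the two proofs to get a proof of (R,¬R); flip the proof of (R,¬R) to get a derivation from [¬R,R] = ¬(R,¬R)... to f; prepend an instance of generic interaction i↓ from t to [¬R,R], reduced to atomic form via switch; this yields a proof of f, contradicting weak consistency.) -/
def Str.eval (v : ℕ → Bool) : Str → Bool
  | .f => false
  | .t => true
  | .atom n => v n
  | .or A B => A.eval v || B.eval v
  | .and A B => A.eval v && B.eval v
  | .neg A => !(A.eval v)

lemma equiv_eval {A B : Str} (h : equiv A B) (v : ℕ → Bool) :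
    A.eval v = B.eval v := by
  induction h with
  | refl => rfl
  | symm _ ih => exact ih.symm
  | trans _ _ ih1 ih2 => exact ih1.trans ih2
  | or_congr _ _ ih1 ih2 => simp [Str.eval, ih1, ih2]
  | and_congr _ _ ih1 ih2 => simp [Str.eval, ih1, ih2]
  | neg_congr _ ih => simp [Str.eval, ih]
  | or_assoc A B C => simp [Str.eval, Bool.or_assoc]
  | or_comm A B => simp [Str.eval, Bool.or_comm]
  | and_assoc A B C => simp [Str.eval, Bool.and_assoc]
  | and_comm A B => simp [Str.eval, Bool.and_comm]
  | dm_or A B => simp [Str.eval]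
  | dm_and A B => simp [Str.eval]
  | neg_neg A => simp [Str.eval]
  | neg_f => rfl
  | neg_t => rfl
  | or_f R => simp [Str.eval]
  | and_t R => simp [Str.eval]
  | or_t_t => rfl
  | and_f_f => rfl

lemma fill_mono (S : Ctx) {A B : Str} (v : ℕ → Bool)
    (h : A.eval v = true → B.eval v = true) :
    (S.fill A).eval v = true → (S.fill B).eval v = true := by
  induction S with
  | hole => exact h
  | orl S T ih => simp only [Ctx.fill, Str.eval, Bool.or_eq_true]; rintro (h1|h1)
                  · exact Or.inl (ih h1)
                  · exact Or.inr h1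
  | orr T S ih => simp only [Ctx.fill, Str.eval, Bool.or_eq_true]; rintro (h1|h1)
                  · exact Or.inl h1
                  · exact Or.inr (ih h1)
  | andl S T ih => simp only [Ctx.fill, Str.eval, Bool.and_eq_true]
                   exact fun ⟨h1, h2⟩ => ⟨ih h1, h2⟩
  | andr T S ih => simp only [Ctx.fill, Str.eval, Bool.and_eq_true]
                   exact fun ⟨h1, h2⟩ => ⟨h1, ih h2⟩

lemma step_sound {A B : Str} (h : step A B) (v : ℕ → Bool) :
    A.eval v = true → B.eval v = true := by
  cases h with
  | ai_down S a => exact fill_mono S v (by simp [Str.eval])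
  | ai_up S a => exact fill_mono S v (by simp [Str.eval])
  | s S R U T => exact fill_mono S v (by
      simp only [Str.eval]
      cases R.eval v <;> cases U.eval v <;> cases T.eval v <;> simp)
  | c_down S R => exact fill_mono S v (by simp [Str.eval])
  | c_up S R => exact fill_mono S v (by simp [Str.eval])
  | w_down S R => exact fill_mono S v (by simp [Str.eval])
  | w_up S R => exact fill_mono S v (by simp [Str.eval])

lemma deriv_sound {A B : Str} (h : Deriv A B) (v : ℕ → Bool) :
    A.eval v = true → B.eval v = true := by
  induction h with
  | refl => exact id
  | step h1 _ ih => exact fun hA => ih (step_sound h1 v hA)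
  | eq h1 _ ih => exact fun hA => ih ((equiv_eval h1 v) ▸ hA)

/-- strong consistency of SKS: no structure is provable
together with its negation. -/
theorem strong_consistency (R : Str) :
    ¬ (Deriv .t R ∧ Deriv .t (.neg R)) := by
  rintro ⟨h1, h2⟩
  have e1 := deriv_sound h1 (fun _ => true) rfl
  have e2 := deriv_sound h2 (fun _ => true) rfl
  simp only [Str.eval] at e2
  rw [e1] at e2
  exact absurd e2 (by simp)
end
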